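/- arXiv:1411.1739 — 2 statements merged into one kernel-verified Lean document; each statement's English description precedes it below -/
import Mathlib

section
/- Let $w \in L^1(\mathbb{R})$ be a weight supported in $[-\delta, \delta]$, let $(\nu_k)$ be a sequence of real numbers and $s(\nu_k)$ complex coefficients with $\sum_k |s(\nu_k)| < \infty$. Set $S(t) = \sum_k s(\nu_k) e^{2\pi i \nu_k t}$ and $m_{\delta,T} = \min_{|t| \le T} |\widehat{w}(t)|^2$, where $\widehat{w}(y) = \int_{\mathbb{R}} w(t) e^{-2\pi i t y}\,dt$. Then $m_{\delta,T} \int_{-T}^{T} |S(t)|^2\,dt \le \int_{\mathbb{R}} \big|\sum_k s(\nu_k) w(x - \nu_k)\big|^2\,dx$. -/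
open MeasureTheory Real Complex Set FourierTransform
open scoped ENNReal NNReal

lemma amgm_ennreal (a b : ℝ≥0∞) : 2 * (a * b) ≤ a ^ 2 + b ^ 2 := by
  rcases eq_or_ne a ⊤ with rfl | ha
  · rcases eq_or_ne b 0 with rfl | hb
    · simp
    · simp [ENNReal.top_mul hb, ENNReal.top_pow]
  rcases eq_or_ne b ⊤ with rfl | hb
  · rcases eq_or_ne a 0 with rfl | ha0
    · simp
    · simp [ENNReal.mul_top ha0, ENNReal.top_pow]
  lift a to ℝ≥0 using ha
  lift b to ℝ≥0 using hb
  have h : (2 : ℝ≥0) * (a * b) ≤ a ^ 2 + b ^ 2 := by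
    have := two_mul_le_add_sq (a : ℝ) (b : ℝ)
    rw [← NNReal.coe_le_coe]
    push_cast
    nlinarith
  calc (2 : ℝ≥0∞) * (a * b) = ((2 * (a * b) : ℝ≥0) : ℝ≥0∞) := by push_cast; ring
  _ ≤ ((a ^ 2 + b ^ 2 : ℝ≥0) : ℝ≥0∞) := by exact_mod_cast h
  _ = (a : ℝ≥0∞) ^ 2 + (b : ℝ≥0∞) ^ 2 := by push_cast; ring

lemma gauss_kernel_eq (ε : ℝ) (hε : 0 < ε) (u : ℝ) :
    ∫ t : ℝ, Complex.exp (Complex.I * (↑(-(2 * π * u)) : ℂ) * t) *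
      Complex.exp (-((π * ε : ℝ) : ℂ) * t ^ 2)
      = (((1/ε) ^ ((1:ℝ)/2) * rexp (-(π/ε) * u ^ 2) : ℝ) : ℂ) := by
  have hb : (0:ℝ) < ((π * ε : ℝ) : ℂ).re := by
    simpa using mul_pos pi_pos hε
  rw [fourierIntegral_gaussian hb ((-(2 * π * u) : ℝ) : ℂ)]
  have hπ : (π : ℂ) ≠ 0 := Complex.ofReal_ne_zero.mpr pi_ne_zero
  have hε' : (ε : ℂ) ≠ 0 := Complex.ofReal_ne_zero.mpr hε.ne'
  have h1 : ((π:ℂ) / ((π * ε : ℝ) : ℂ)) = (((1/ε : ℝ)) : ℂ) := by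
    push_cast
    rw [div_mul_eq_div_div, div_self hπ]
  rw [h1]
  have h2 : (((1/ε : ℝ)) : ℂ) ^ (1/2 : ℂ) = (((1/ε) ^ ((1:ℝ)/2) : ℝ) : ℂ) := by
    rw [Complex.ofReal_cpow (by positivity) ((1:ℝ)/2)]
    norm_num
  rw [h2]
  have h3 : -((((-(2 * π * u) : ℝ)) : ℂ)) ^ 2 / (4 * ((π * ε : ℝ) : ℂ)) =
      ((-(π/ε) * u ^ 2 : ℝ) : ℂ) := by
    push_cast
    field_simp
    ring
  rw [h3, ← Complex.ofReal_exp, ← Complex.ofReal_mul]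

lemma gauss_lintegral_one (ε : ℝ) (hε : 0 < ε) :
    ∫⁻ u : ℝ, ENNReal.ofReal ((1/ε) ^ ((1:ℝ)/2) * rexp (-(π/ε) * u ^ 2)) = 1 := by
  have hb : 0 < π / ε := div_pos pi_pos hε
  have hint : Integrable (fun u : ℝ => (1/ε) ^ ((1:ℝ)/2) * rexp (-(π/ε) * u ^ 2)) :=
    (integrable_exp_neg_mul_sq hb).const_mul _
  rw [← ofReal_integral_eq_lintegral_ofReal hint (Filter.Eventually.of_forall fun u => by positivity)]
  rw [integral_const_mul, integral_gaussian]
  have : π / (π / ε) = ε := by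
    field_simp
  rw [this]
  have h4 : (1/ε) ^ ((1:ℝ)/2) * Real.sqrt ε = 1 := by
    rw [Real.sqrt_eq_rpow, ← Real.mul_rpow (by positivity) hε.le, one_div_mul_cancel hε.ne',
      Real.one_rpow]
  rw [h4, ENNReal.ofReal_one]

theorem plancherel_half (F : ℝ → ℂ) (hF1 : Integrable F) :
    ∫⁻ t : ℝ, (‖𝓕 F t‖₊ : ℝ≥0∞) ^ 2 ≤ ∫⁻ x : ℝ, (‖F x‖₊ : ℝ≥0∞) ^ 2 := by
  by_cases hfin : (∫⁻ x : ℝ, (‖F x‖₊ : ℝ≥0∞) ^ 2) = ⊤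
  · simp [hfin]
  set B' := ∫⁻ x : ℝ, (‖F x‖₊ : ℝ≥0∞) ^ 2 with hB'
  have hcont : Continuous (𝓕 F) :=
    VectorFourier.fourierIntegral_continuous Real.continuous_fourierChar
      (by exact continuous_inner) hF1
  have hFbd : ∀ t : ℝ, ‖𝓕 F t‖ ≤ ∫ x, ‖F x‖ := fun t =>
    VectorFourier.norm_fourierIntegral_le_integral_norm _ _ _ _ _
  -- ε-step
  have key : ∀ ε : ℝ, 0 < ε →
      (∫⁻ t : ℝ, (‖𝓕 F t‖₊ : ℝ≥0∞) ^ 2 * ENNReal.ofReal (rexp (-(π * ε) * t ^ 2))) ≤ B' := by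
    intro ε hε
    have hπε : 0 < π * ε := by positivity
    set L : ℝ := ∫ x, ‖F x‖ with hL
    have hL0 : 0 ≤ L := integral_nonneg fun x => norm_nonneg _
    set G : ℝ → ℝ := fun u => (1/ε) ^ ((1:ℝ)/2) * rexp (-(π/ε) * u ^ 2) with hG
    have hGnn : ∀ u, 0 ≤ G u := fun u => by simp only [hG]; positivity
    have hGcont : Continuous G := by
      simp only [hG]; fun_prop
    have hGm : Measurable fun u : ℝ => ENNReal.ofReal (G u) :=
      ENNReal.measurable_ofReal.comp hGcont.measurable
    set g : ℝ → ℝ := fun t => rexp (-(π * ε) * t ^ 2) * ‖𝓕 F t‖ ^ 2 with hgdef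
    have hg_int : Integrable g := by
      refine Integrable.mono' ((integrable_exp_neg_mul_sq hπε).const_mul (L ^ 2)) ?_ ?_
      · exact ((Real.continuous_exp.comp (by fun_prop)).mul ((hcont.norm).pow 2)).aestronglyMeasurable
      · refine Filter.Eventually.of_forall fun t => ?_
        have h1 : ‖𝓕 F t‖ ^ 2 ≤ L ^ 2 := by
          apply pow_le_pow_left₀ (norm_nonneg _) (hFbd t)
        rw [Real.norm_eq_abs, _root_.abs_of_nonneg (show (0:ℝ) ≤ g t by
          simp only [hgdef]; positivity)]
        simp only [hgdef]
        calc rexp (-(π * ε) * t ^ 2) * ‖𝓕 F t‖ ^ 2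
            ≤ rexp (-(π * ε) * t ^ 2) * L ^ 2 := by
              exact mul_le_mul_of_nonneg_left h1 (Real.exp_pos _).le
          _ = L ^ 2 * rexp (-(π * ε) * t ^ 2) := by ring
    set Φ : ℝ × (ℝ × ℝ) → ℂ := fun z =>
      ((rexp (-(π * ε) * z.1 ^ 2) : ℝ) : ℂ) *
        ((Complex.exp ((↑(-2 * π * z.2.1 * z.1) : ℂ) * Complex.I) * F z.2.1) *
          (starRingEnd ℂ) (Complex.exp ((↑(-2 * π * z.2.2 * z.1) : ℂ) * Complex.I) * F z.2.2))
      with hΦ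
    have hprod : ∀ t : ℝ, 𝓕 F t * (starRingEnd ℂ) (𝓕 F t)
        = ∫ p : ℝ × ℝ, (Complex.exp ((↑(-2 * π * p.1 * t) : ℂ) * Complex.I) * F p.1) *
            (starRingEnd ℂ) (Complex.exp ((↑(-2 * π * p.2 * t) : ℂ) * Complex.I) * F p.2)
            ∂((volume : Measure ℝ).prod volume) := by
      intro t
      rw [Real.fourier_real_eq_integral_exp_smul]
      simp_rw [smul_eq_mul]
      rw [← integral_conj, ← integral_prod_mul]
    have hΦint : Integrable Φ ((volume : Measure ℝ).prod ((volume : Measure ℝ).prod volume)) := by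
      have hbase : Integrable (fun z : ℝ × (ℝ × ℝ) =>
          rexp (-(π * ε) * z.1 ^ 2) * (‖F z.2.1‖ * ‖F z.2.2‖))
          ((volume : Measure ℝ).prod ((volume : Measure ℝ).prod volume)) :=
        (integrable_exp_neg_mul_sq hπε).mul_prod (hF1.norm.mul_prod hF1.norm)
      refine hbase.mono' ?_ ?_
      · have hA : AEStronglyMeasurable (fun z : ℝ × (ℝ × ℝ) => F z.2.1)
            ((volume : Measure ℝ).prod ((volume : Measure ℝ).prod volume)) :=
          AEStronglyMeasurable.comp_snd (AEStronglyMeasurable.comp_fst hF1.1)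
        have hB : AEStronglyMeasurable (fun z : ℝ × (ℝ × ℝ) => F z.2.2)
            ((volume : Measure ℝ).prod ((volume : Measure ℝ).prod volume)) :=
          AEStronglyMeasurable.comp_snd (AEStronglyMeasurable.comp_snd hF1.1)
        have hc1 : Continuous (fun z : ℝ × (ℝ × ℝ) => ((rexp (-(π * ε) * z.1 ^ 2) : ℝ) : ℂ)) := by
          fun_prop
        have hc2 : Continuous (fun z : ℝ × (ℝ × ℝ) =>
            Complex.exp ((↑(-2 * π * z.2.1 * z.1) : ℂ) * Complex.I)) := by fun_prop
        have hc3 : Continuous (fun z : ℝ × (ℝ × ℝ) =>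
            Complex.exp ((↑(-2 * π * z.2.2 * z.1) : ℂ) * Complex.I)) := by fun_prop
        exact (hc1.aestronglyMeasurable.mul
          ((hc2.aestronglyMeasurable.mul hA).mul
            (Complex.continuous_conj.comp_aestronglyMeasurable
              (hc3.aestronglyMeasurable.mul hB))))
      · refine Filter.Eventually.of_forall fun z => le_of_eq ?_
        simp only [hΦ, norm_mul, Complex.norm_real, Real.norm_eq_abs,
          abs_of_pos (Real.exp_pos _), Complex.norm_exp_ofReal_mul_I, one_mul,
          RCLike.norm_conj]
    have hswap : (∫ t, ((rexp (-(π * ε) * t ^ 2) : ℝ) : ℂ) *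
          (𝓕 F t * (starRingEnd ℂ) (𝓕 F t)))
        = ∫ p : ℝ × ℝ, (F p.1 * (starRingEnd ℂ) (F p.2)) * ((G (p.1 - p.2) : ℝ) : ℂ)
          ∂((volume : Measure ℝ).prod volume) := by
      have step1 : (∫ t, ((rexp (-(π * ε) * t ^ 2) : ℝ) : ℂ) *
            (𝓕 F t * (starRingEnd ℂ) (𝓕 F t)))
          = ∫ t : ℝ, ∫ p : ℝ × ℝ, Φ (t, p) ∂((volume : Measure ℝ).prod volume) := by
        refine integral_congr_ae (Filter.Eventually.of_forall fun t => ?_)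
        dsimp only
        rw [hprod t, ← integral_const_mul]
      rw [step1, integral_integral_swap hΦint]
      refine integral_congr_ae (Filter.Eventually.of_forall fun p => ?_)
      have conj_exp : ∀ r : ℝ, (starRingEnd ℂ) (Complex.exp ((r:ℂ) * Complex.I))
          = Complex.exp (-((r:ℂ) * Complex.I)) := by
        intro r
        rw [← Complex.exp_conj]
        congr 1
        simp [Complex.conj_ofReal]
      have exp_comb : ∀ t : ℝ, ((rexp (-(π * ε) * t ^ 2) : ℝ) : ℂ) *
          Complex.exp ((↑(-2 * π * p.1 * t) : ℂ) * Complex.I) *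
          Complex.exp (-((↑(-2 * π * p.2 * t) : ℂ) * Complex.I))
          = Complex.exp (Complex.I * (↑(-(2 * π * (p.1 - p.2))) : ℂ) * t) *
            Complex.exp (-((π * ε : ℝ) : ℂ) * t ^ 2) := by
        intro t
        rw [Complex.ofReal_exp, ← Complex.exp_add, ← Complex.exp_add, ← Complex.exp_add]
        congr 1
        push_cast
        ring
      have hptwise : ∀ t : ℝ, Φ (t, p) = (F p.1 * (starRingEnd ℂ) (F p.2)) *
          (Complex.exp (Complex.I * (↑(-(2 * π * (p.1 - p.2))) : ℂ) * t) *
            Complex.exp (-((π * ε : ℝ) : ℂ) * t ^ 2)) := by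
        intro t
        simp only [hΦ, map_mul, conj_exp]
        rw [← exp_comb t]
        ring
      simp_rw [hptwise]
      rw [integral_const_mul, gauss_kernel_eq ε hε (p.1 - p.2)]
    -- norm bound via lintegral
    have hJnorm : ‖∫ p : ℝ × ℝ, (F p.1 * (starRingEnd ℂ) (F p.2)) * ((G (p.1 - p.2) : ℝ) : ℂ)
          ∂((volume : Measure ℝ).prod volume)‖
        ≤ (∫⁻ p : ℝ × ℝ, ((‖F p.1‖₊ : ℝ≥0∞) * (‖F p.2‖₊ : ℝ≥0∞)) *
            ENNReal.ofReal (G (p.1 - p.2)) ∂((volume : Measure ℝ).prod volume)).toReal := by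
      refine (norm_integral_le_lintegral_norm _).trans (le_of_eq ?_)
      congr 1
      refine lintegral_congr fun p => ?_
      rw [norm_mul, norm_mul, RCLike.norm_conj, Complex.norm_real,
        Real.norm_eq_abs, _root_.abs_of_nonneg (hGnn _), ENNReal.ofReal_mul (by positivity),
        ENNReal.ofReal_mul (norm_nonneg _)]
      simp [ofReal_norm, enorm_eq_nnnorm]
    -- L2 bound on the double lintegral
    have hFae : AEMeasurable (fun x => (‖F x‖₊ : ℝ≥0∞)) volume := hF1.1.enorm
    have h1 : AEMeasurable (fun p : ℝ × ℝ => (‖F p.1‖₊ : ℝ≥0∞))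
        ((volume : Measure ℝ).prod volume) :=
      hFae.comp_quasiMeasurePreserving Measure.quasiMeasurePreserving_fst
    have h2 : AEMeasurable (fun p : ℝ × ℝ => (‖F p.2‖₊ : ℝ≥0∞))
        ((volume : Measure ℝ).prod volume) :=
      hFae.comp_quasiMeasurePreserving Measure.quasiMeasurePreserving_snd
    have hGm2 : Measurable fun p : ℝ × ℝ => ENNReal.ofReal (G (p.1 - p.2)) :=
      hGm.comp (measurable_fst.sub measurable_snd)
    have hinner1 : ∀ x : ℝ, (∫⁻ y : ℝ, ENNReal.ofReal (G (x - y))) = 1 := by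
      intro x
      have e1 : (fun y : ℝ => ENNReal.ofReal (G (x - y)))
          = fun y : ℝ => (fun u : ℝ => ENNReal.ofReal (G (-u))) (y - x) := by
        funext y; congr 1; ring_nf
      rw [e1, lintegral_sub_right_eq_self (fun u : ℝ => ENNReal.ofReal (G (-u))) x]
      rw [(Measure.measurePreserving_neg (volume : Measure ℝ)).lintegral_comp hGm]
      exact gauss_lintegral_one ε hε
    have hinner2 : ∀ y : ℝ, (∫⁻ x : ℝ, ENNReal.ofReal (G (x - y))) = 1 := fun y =>
      (lintegral_sub_right_eq_self (fun u : ℝ => ENNReal.ofReal (G u)) y).trans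
        (gauss_lintegral_one ε hε)
    have hint1 : ∫⁻ p : ℝ × ℝ, (‖F p.1‖₊ : ℝ≥0∞) ^ 2 * ENNReal.ofReal (G (p.1 - p.2))
        ∂((volume : Measure ℝ).prod volume) = B' := by
      rw [lintegral_prod _ ((h1.pow_const 2).fun_mul hGm2.aemeasurable)]
      dsimp only
      calc ∫⁻ x : ℝ, ∫⁻ y : ℝ, (‖F x‖₊ : ℝ≥0∞) ^ 2 * ENNReal.ofReal (G (x - y))
          = ∫⁻ x : ℝ, (‖F x‖₊ : ℝ≥0∞) ^ 2 * ∫⁻ y : ℝ, ENNReal.ofReal (G (x - y)) := by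
            refine lintegral_congr fun x => ?_
            rw [lintegral_const_mul' _ _ (ENNReal.pow_ne_top ENNReal.coe_ne_top)]
        _ = B' := by
            rw [hB']
            refine lintegral_congr fun x => ?_
            rw [hinner1 x, mul_one]
    have hint2 : ∫⁻ p : ℝ × ℝ, (‖F p.2‖₊ : ℝ≥0∞) ^ 2 * ENNReal.ofReal (G (p.1 - p.2))
        ∂((volume : Measure ℝ).prod volume) = B' := by
      rw [lintegral_prod_symm _ ((h2.pow_const 2).fun_mul hGm2.aemeasurable)]
      dsimp only
      calc ∫⁻ y : ℝ, ∫⁻ x : ℝ, (‖F y‖₊ : ℝ≥0∞) ^ 2 * ENNReal.ofReal (G (x - y))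
          = ∫⁻ y : ℝ, (‖F y‖₊ : ℝ≥0∞) ^ 2 * ∫⁻ x : ℝ, ENNReal.ofReal (G (x - y)) := by
            refine lintegral_congr fun y => ?_
            rw [lintegral_const_mul' _ _ (ENNReal.pow_ne_top ENNReal.coe_ne_top)]
        _ = B' := by
            rw [hB']
            refine lintegral_congr fun y => ?_
            rw [hinner2 y, mul_one]
    have L2 : (∫⁻ p : ℝ × ℝ, ((‖F p.1‖₊ : ℝ≥0∞) * (‖F p.2‖₊ : ℝ≥0∞)) *
        ENNReal.ofReal (G (p.1 - p.2)) ∂((volume : Measure ℝ).prod volume)) ≤ B' := by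
      rw [← ENNReal.mul_le_mul_iff_right (two_ne_zero) (by norm_num : (2:ℝ≥0∞) ≠ ⊤)]
      calc 2 * ∫⁻ p : ℝ × ℝ, ((‖F p.1‖₊ : ℝ≥0∞) * (‖F p.2‖₊ : ℝ≥0∞)) *
            ENNReal.ofReal (G (p.1 - p.2)) ∂((volume : Measure ℝ).prod volume)
          = ∫⁻ p : ℝ × ℝ, 2 * (((‖F p.1‖₊ : ℝ≥0∞) * (‖F p.2‖₊ : ℝ≥0∞)) *
            ENNReal.ofReal (G (p.1 - p.2))) ∂((volume : Measure ℝ).prod volume) := by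
            rw [lintegral_const_mul' _ _ (by norm_num)]
        _ ≤ ∫⁻ p : ℝ × ℝ, ((‖F p.1‖₊ : ℝ≥0∞) ^ 2 + (‖F p.2‖₊ : ℝ≥0∞) ^ 2) *
            ENNReal.ofReal (G (p.1 - p.2)) ∂((volume : Measure ℝ).prod volume) := by
            refine lintegral_mono fun p => ?_
            rw [← mul_assoc]
            exact mul_le_mul_left (amgm_ennreal _ _) _
        _ = ∫⁻ p : ℝ × ℝ, ((‖F p.1‖₊ : ℝ≥0∞) ^ 2 * ENNReal.ofReal (G (p.1 - p.2)) +
            (‖F p.2‖₊ : ℝ≥0∞) ^ 2 * ENNReal.ofReal (G (p.1 - p.2)))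
            ∂((volume : Measure ℝ).prod volume) := by
            refine lintegral_congr fun p => ?_
            rw [add_mul]
        _ = B' + B' := by
            rw [lintegral_add_left' ((h1.pow_const 2).fun_mul hGm2.aemeasurable), hint1, hint2]
        _ = 2 * B' := by ring
    -- put it together
    have lhs_eq : (∫⁻ t : ℝ, (‖𝓕 F t‖₊ : ℝ≥0∞) ^ 2 * ENNReal.ofReal (rexp (-(π * ε) * t ^ 2)))
        = ENNReal.ofReal (∫ t, g t) := by
      rw [ofReal_integral_eq_lintegral_ofReal hg_int
        (Filter.Eventually.of_forall fun t => by simp only [hgdef]; positivity)]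
      refine lintegral_congr fun t => ?_
      simp only [hgdef]
      rw [ENNReal.ofReal_mul (Real.exp_pos _).le, ENNReal.ofReal_pow (norm_nonneg _)]
      rw [ofReal_norm, enorm_eq_nnnorm]
      ring
    have hre : (∫ t, g t) = (∫ t, ((rexp (-(π * ε) * t ^ 2) : ℝ) : ℂ) *
        (𝓕 F t * (starRingEnd ℂ) (𝓕 F t))).re := by
      have hfun : (fun t : ℝ => ((rexp (-(π * ε) * t ^ 2) : ℝ) : ℂ) *
          (𝓕 F t * (starRingEnd ℂ) (𝓕 F t))) = fun t : ℝ => ((g t : ℝ) : ℂ) := by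
        funext t
        rw [Complex.mul_conj, Complex.normSq_eq_norm_sq]
        simp only [hgdef]
        push_cast
        ring
      rw [hfun, show (∫ t : ℝ, ((g t : ℝ) : ℂ)) = ((∫ t, g t : ℝ) : ℂ) from integral_ofReal,
        Complex.ofReal_re]
    rw [lhs_eq]
    have hchain : (∫ t, g t) ≤ B'.toReal := by
      rw [hre]
      calc (∫ t, ((rexp (-(π * ε) * t ^ 2) : ℝ) : ℂ) *
            (𝓕 F t * (starRingEnd ℂ) (𝓕 F t))).re
          ≤ ‖∫ t, ((rexp (-(π * ε) * t ^ 2) : ℝ) : ℂ) *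
            (𝓕 F t * (starRingEnd ℂ) (𝓕 F t))‖ := Complex.re_le_norm _
        _ = ‖∫ p : ℝ × ℝ, (F p.1 * (starRingEnd ℂ) (F p.2)) * ((G (p.1 - p.2) : ℝ) : ℂ)
            ∂((volume : Measure ℝ).prod volume)‖ := by rw [hswap]
        _ ≤ (∫⁻ p : ℝ × ℝ, ((‖F p.1‖₊ : ℝ≥0∞) * (‖F p.2‖₊ : ℝ≥0∞)) *
            ENNReal.ofReal (G (p.1 - p.2)) ∂((volume : Measure ℝ).prod volume)).toReal := hJnorm
        _ ≤ B'.toReal := ENNReal.toReal_mono hfin L2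
    calc ENNReal.ofReal (∫ t, g t) ≤ ENNReal.ofReal B'.toReal :=
          ENNReal.ofReal_le_ofReal hchain
      _ ≤ B' := ENNReal.ofReal_toReal_le
  -- MCT step
  have hmexp : ∀ (t : ℝ) (n m : ℕ), n ≤ m →
      rexp (-(π * (1/(n+1))) * t ^ 2) ≤ rexp (-(π * (1/(m+1))) * t ^ 2) := by
    intro t n m hnm
    apply Real.exp_le_exp.mpr
    have h1 : (1:ℝ)/(m+1) ≤ 1/(n+1) := by
      apply one_div_le_one_div_of_le (by positivity)
      exact_mod_cast by omega
    have := mul_le_mul_of_nonneg_right (mul_le_mul_of_nonneg_left h1 (le_of_lt pi_pos)) (sq_nonneg t)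
    linarith
  have hsup : ∀ t : ℝ, (⨆ n : ℕ, ENNReal.ofReal (rexp (-(π * (1/(n+1))) * t ^ 2))) = 1 := by
    intro t
    apply iSup_eq_of_tendsto
    · intro n m hnm
      exact ENNReal.ofReal_le_ofReal (hmexp t n m hnm)
    · have h0 : Filter.Tendsto (fun n : ℕ => -(π * (1/(n+1))) * t ^ 2) Filter.atTop (nhds 0) := by
        have := tendsto_one_div_add_atTop_nhds_zero_nat (𝕜 := ℝ)
        have h2 : Filter.Tendsto (fun n : ℕ => (1:ℝ)/(n+1)) Filter.atTop (nhds 0) := by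
          simpa using this
        have := ((h2.const_mul π).neg.mul_const (t ^ 2))
        simpa using this
      have := (Real.continuous_exp.tendsto 0).comp h0
      rw [Real.exp_zero] at this
      simpa using (ENNReal.tendsto_ofReal this)
  calc ∫⁻ t : ℝ, (‖𝓕 F t‖₊ : ℝ≥0∞) ^ 2
      = ∫⁻ t : ℝ, ⨆ n : ℕ, (‖𝓕 F t‖₊ : ℝ≥0∞) ^ 2 *
          ENNReal.ofReal (rexp (-(π * (1/(n+1))) * t ^ 2)) := by
        congr 1; ext t
        rw [← ENNReal.mul_iSup, hsup t, mul_one]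
    _ = ⨆ n : ℕ, ∫⁻ t : ℝ, (‖𝓕 F t‖₊ : ℝ≥0∞) ^ 2 *
          ENNReal.ofReal (rexp (-(π * (1/(n+1))) * t ^ 2)) := by
        apply lintegral_iSup'
        · intro n
          apply AEMeasurable.fun_mul
          · exact (hcont.aestronglyMeasurable.enorm.pow_const 2)
          · exact (ENNReal.measurable_ofReal.comp (by fun_prop)).aemeasurable
        · refine Filter.Eventually.of_forall fun t => ?_
          intro n m hnm
          exact mul_le_mul_right (ENNReal.ofReal_le_ofReal (hmexp t n m hnm)) _
    _ ≤ B' := iSup_le fun n => key _ (by positivity)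

theorem gallagher_generalized_supported
    (δ T : ℝ) (hδ : 0 < δ) (hT : 0 < T)
    (w : ℝ → ℂ) (hw : Integrable w)
    (hsupp : Function.support w ⊆ Set.Icc (-δ) δ)
    (ν : ℕ → ℝ) (s : ℕ → ℂ) (hs : Summable (fun k => ‖s k‖))
    (S : ℝ → ℂ)
    (hS : ∀ t : ℝ, S t = ∑' k, s k * Complex.exp (2 * π * Complex.I * (ν k : ℂ) * (t : ℂ)))
    (m : ℝ)
    (hm : m = sInf ((fun t : ℝ =>
        ‖∫ u : ℝ, w u * Complex.exp (-(2 * π * Complex.I * (u : ℂ) * (t : ℂ)))‖ ^ 2) ''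
        Set.Icc (-T) T)) :
    ENNReal.ofReal m * ∫⁻ t in Set.Icc (-T) T, ENNReal.ofReal (‖S t‖ ^ 2) ≤
      ∫⁻ x : ℝ, ENNReal.ofReal (‖∑' k, s k * w (x - ν k)‖ ^ 2) := by
  classical
  set W : ℝ → ℂ := fun t => ∫ u : ℝ, w u * Complex.exp (-(2 * π * Complex.I * (u : ℂ) * (t : ℂ)))
    with hWdef
  set F : ℝ → ℂ := fun x => ∑' k, s k * w (x - ν k) with hFdef
  have hconv : ∀ z : ℂ, ENNReal.ofReal (‖z‖ ^ 2) = (‖z‖₊ : ℝ≥0∞) ^ 2 := fun z => by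
    rw [ENNReal.ofReal_pow (norm_nonneg _), ofReal_norm, enorm_eq_nnnorm]
  have hsnn : Summable (fun k => ‖s k‖₊) := by
    rw [← NNReal.summable_coe]
    simpa only [coe_nnnorm] using hs
  have hsE : (∑' k, (‖s k‖₊ : ℝ≥0∞)) ≠ ⊤ := ENNReal.tsum_coe_ne_top_iff_summable.2 hsnn
  have hterm : ∀ k, Integrable (fun x => s k * w (x - ν k)) := fun k =>
    (hw.comp_sub_right (ν k)).const_mul (s k)
  have hterm_l : ∀ k, (∫⁻ x, (‖s k * w (x - ν k)‖₊ : ℝ≥0∞)) =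
      (‖s k‖₊ : ℝ≥0∞) * ∫⁻ x, (‖w x‖₊ : ℝ≥0∞) := by
    intro k
    simp_rw [nnnorm_mul, ENNReal.coe_mul]
    rw [lintegral_const_mul' _ _ ENNReal.coe_ne_top]
    congr 1
    exact lintegral_sub_right_eq_self (fun x => (‖w x‖₊ : ℝ≥0∞)) (ν k)
  have hwtop : (∫⁻ x, (‖w x‖₊ : ℝ≥0∞)) ≠ ⊤ := hw.2.ne
  have htsum_fin : (∫⁻ x, ∑' k, (‖s k * w (x - ν k)‖₊ : ℝ≥0∞)) ≠ ⊤ := by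
    rw [lintegral_tsum (f := fun k x => (‖s k * w (x - ν k)‖₊ : ℝ≥0∞)) fun k => (hterm k).1.enorm]
    rw [tsum_congr hterm_l, ENNReal.tsum_mul_right]
    exact ENNReal.mul_ne_top hsE hwtop
  have hae : ∀ᵐ x : ℝ, Summable fun k => ‖s k * w (x - ν k)‖ := by
    have h := ae_lt_top' (AEMeasurable.ennreal_tsum fun k => (hterm k).1.enorm) htsum_fin
    filter_upwards [h] with x hx
    have hsum : Summable fun k => ‖s k * w (x - ν k)‖₊ :=
      ENNReal.tsum_coe_ne_top_iff_summable.1 hx.ne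
    simpa [coe_nnnorm] using NNReal.summable_coe.2 hsum
  have hFmeas : AEStronglyMeasurable F volume := by
    apply aestronglyMeasurable_of_tendsto_ae (u := Filter.atTop)
      (f := fun n x => ∑ k ∈ Finset.range n, s k * w (x - ν k))
    · exact fun n => Finset.aestronglyMeasurable_fun_sum _ fun k _ => (hterm k).1
    · filter_upwards [hae] with x hx
      exact (hx.of_norm).hasSum.tendsto_sum_nat
  have hF1 : Integrable F := by
    refine ⟨hFmeas, ?_⟩
    refine lt_of_le_of_lt (lintegral_mono_ae ?_) htsum_fin.lt_top
    filter_upwards [hae] with x hx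
    calc (‖F x‖₊ : ℝ≥0∞) = ENNReal.ofReal ‖F x‖ := (ofReal_norm _).symm
      _ ≤ ENNReal.ofReal (∑' k, ‖s k * w (x - ν k)‖) :=
          ENNReal.ofReal_le_ofReal (norm_tsum_le_tsum_norm hx)
      _ = ∑' k, ENNReal.ofReal ‖s k * w (x - ν k)‖ :=
          ENNReal.ofReal_tsum_of_nonneg (fun k => norm_nonneg _) hx
      _ = ∑' k, (‖s k * w (x - ν k)‖₊ : ℝ≥0∞) := by
          refine tsum_congr fun k => ofReal_norm _
  have hnn1 : ∀ (r : ℝ) (z : ℂ), (‖Complex.exp ((r : ℂ) * Complex.I) * z‖₊ : ℝ≥0∞) = ‖z‖₊ := by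
    intro r z
    simp [nnnorm_mul, ← norm_toNNReal, Complex.norm_exp_ofReal_mul_I]
  have hFhat : ∀ t : ℝ, 𝓕 F t = W t * S (-t) := by
    intro t
    rw [Real.fourier_real_eq_integral_exp_smul]
    have h1 : ∀ v : ℝ, Complex.exp ((↑(-2 * π * v * t) : ℂ) * Complex.I) • F v
        = ∑' k, Complex.exp ((↑(-2 * π * v * t) : ℂ) * Complex.I) * (s k * w (v - ν k)) := by
      intro v
      rw [smul_eq_mul, tsum_mul_left]
    rw [integral_congr_ae (Filter.Eventually.of_forall h1)]
    have hcond : (∑' (k : ℕ), ∫⁻ v : ℝ, (‖Complex.exp ((↑(-2 * π * v * t) : ℂ) * Complex.I) *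
        (s k * w (v - ν k))‖₊ : ℝ≥0∞)) ≠ ⊤ := by
      have heq : ∀ k : ℕ, (∫⁻ v : ℝ, (‖Complex.exp ((↑(-2 * π * v * t) : ℂ) * Complex.I) *
          (s k * w (v - ν k))‖₊ : ℝ≥0∞)) = ∫⁻ v, (‖s k * w (v - ν k)‖₊ : ℝ≥0∞) := by
        intro k
        exact lintegral_congr fun v => hnn1 _ _
      rw [tsum_congr heq, tsum_congr hterm_l, ENNReal.tsum_mul_right]
      exact ENNReal.mul_ne_top hsE hwtop
    rw [integral_tsum (f := fun (k : ℕ) (v : ℝ) => Complex.exp ((↑(-2 * π * v * t) : ℂ) * Complex.I) *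
        (s k * w (v - ν k)))
      (fun k => (Continuous.aestronglyMeasurable
        (by fun_prop : Continuous fun v : ℝ =>
          Complex.exp ((↑(-2 * π * v * t) : ℂ) * Complex.I))).mul (hterm k).1)
      hcond]
    have h2 : ∀ k, (∫ v : ℝ, Complex.exp ((↑(-2 * π * v * t) : ℂ) * Complex.I) *
        (s k * w (v - ν k))) = (s k * Complex.exp (2 * π * Complex.I * (ν k : ℂ) * ((-t : ℝ) : ℂ))) * W t := by
      intro k
      rw [← integral_add_right_eq_self (fun v => Complex.exp ((↑(-2 * π * v * t) : ℂ) * Complex.I) *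
        (s k * w (v - ν k))) (ν k)]
      have h3 : ∀ v : ℝ, Complex.exp ((↑(-2 * π * (v + ν k) * t) : ℂ) * Complex.I) *
          (s k * w ((v + ν k) - ν k))
          = (s k * Complex.exp (2 * π * Complex.I * (ν k : ℂ) * ((-t : ℝ) : ℂ))) *
            (w v * Complex.exp (-(2 * π * Complex.I * (v : ℂ) * (t : ℂ)))) := by
        intro v
        rw [add_sub_cancel_right]
        rw [show ((↑(-2 * π * (v + ν k) * t) : ℂ) * Complex.I)
            = (2 * π * Complex.I * (ν k : ℂ) * ((-t : ℝ) : ℂ)) +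
              (-(2 * π * Complex.I * (v : ℂ) * (t : ℂ))) by push_cast; ring]
        rw [Complex.exp_add]
        ring
      rw [integral_congr_ae (Filter.Eventually.of_forall h3), integral_const_mul]
    rw [tsum_congr h2, tsum_mul_right, ← hS (-t)]
    push_cast
    ring
  -- main assembly
  simp_rw [hconv]
  have hmW : ∀ u ∈ Set.Icc (-T) T, m ≤ ‖W u‖ ^ 2 := by
    intro u hu
    have hbdd : BddBelow ((fun t : ℝ => ‖W t‖ ^ 2) '' Set.Icc (-T) T) := by
      refine ⟨0, fun y hy => ?_⟩
      obtain ⟨t, _, rfl⟩ := hy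
      positivity
    rw [hm]
    exact csInf_le hbdd ⟨u, hu, rfl⟩
  have hrefl : (∫⁻ t in Set.Icc (-T) T, (‖𝓕 F (-t)‖₊ : ℝ≥0∞) ^ 2)
      = ∫⁻ t in Set.Icc (-T) T, (‖𝓕 F t‖₊ : ℝ≥0∞) ^ 2 := by
    have hpre : (fun t : ℝ => -t) ⁻¹' (Set.Icc (-T) T) = Set.Icc (-T) T := by
      ext x
      simp only [Set.mem_preimage, Set.mem_Icc]
      constructor <;> rintro ⟨h1, h2⟩ <;> constructor <;> linarith
    have := (Measure.measurePreserving_neg (volume : Measure ℝ)).setLIntegral_comp_preimage_emb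
      (Homeomorph.neg ℝ).measurableEmbedding (fun t => (‖𝓕 F t‖₊ : ℝ≥0∞) ^ 2) (Set.Icc (-T) T)
    rw [hpre] at this
    exact this
  calc ENNReal.ofReal m * ∫⁻ t in Set.Icc (-T) T, (‖S t‖₊ : ℝ≥0∞) ^ 2
      = ∫⁻ t in Set.Icc (-T) T, ENNReal.ofReal m * (‖S t‖₊ : ℝ≥0∞) ^ 2 :=
        (lintegral_const_mul' _ _ ENNReal.ofReal_ne_top).symm
    _ ≤ ∫⁻ t in Set.Icc (-T) T, (‖𝓕 F (-t)‖₊ : ℝ≥0∞) ^ 2 := by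
        refine setLIntegral_mono' measurableSet_Icc fun t ht => ?_
        rw [hFhat (-t), neg_neg]
        have : ((‖W (-t) * S t‖₊ : ℝ≥0∞)) ^ 2 = (‖W (-t)‖₊ : ℝ≥0∞) ^ 2 * (‖S t‖₊ : ℝ≥0∞) ^ 2 := by
          rw [nnnorm_mul]
          push_cast
          ring
        rw [this]
        refine mul_le_mul_left ?_ _
        have h4 : m ≤ ‖W (-t)‖ ^ 2 := hmW (-t) ⟨by linarith [ht.2], by linarith [ht.1]⟩
        calc ENNReal.ofReal m ≤ ENNReal.ofReal (‖W (-t)‖ ^ 2) := ENNReal.ofReal_le_ofReal h4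
          _ = (‖W (-t)‖₊ : ℝ≥0∞) ^ 2 := hconv _
    _ = ∫⁻ t in Set.Icc (-T) T, (‖𝓕 F t‖₊ : ℝ≥0∞) ^ 2 := hrefl
    _ ≤ ∫⁻ t : ℝ, (‖𝓕 F t‖₊ : ℝ≥0∞) ^ 2 := setLIntegral_le_lintegral _ _
    _ ≤ ∫⁻ x : ℝ, (‖F x‖₊ : ℝ≥0∞) ^ 2 := plancherel_half F hF1
end

section
/- Let $f : \mathbb{N} \to \mathbb{C}$ and let $p$ be a polynomial of degree $c$. Define $\tilde{f}(n) = f(n) - p(\log n)$ and, for a weight $w$ supported in $[-\delta,\delta]$ with $|w| \le M$, set $A(x) = \sum_n w(n-x)f(n) - p(\log x)\sum_n w(n-x)$ and $B(x) = \sum_n w(n-x)\tilde{f}(n)$ (sums over positive integers $n$ with $|n - x| \le \delta$). Then $\sum_{N < x \le 2N} |A(x)|^2 \ll \sum_{N < x \le 2N} |B(x)|^2 + M^2 N^{-1}\delta^4 (\log 3N)^{2c-2}$, with implied constant depending only on $p$. -/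
open Real Classical


lemma aux_log_le {t : ℝ} (ht : 1 ≤ t) : Real.log t ≤ 2 * (Real.sqrt t - 1) := by
  have h0 : (0:ℝ) ≤ t := by linarith
  have h1 : Real.log (Real.sqrt t) = Real.log t / 2 := Real.log_sqrt h0
  have h2 : Real.log (Real.sqrt t) ≤ Real.sqrt t - 1 :=
    Real.log_le_sub_one_of_pos (Real.sqrt_pos.2 (by linarith))
  linarith

lemma aux_abs_log {u v : ℝ} (hu : 1 ≤ u) (hv : 1 ≤ v) (hvu : v ≤ u) :
    |Real.log u - Real.log v| ≤ 2 * |u - v| / (Real.sqrt u * Real.sqrt v) := by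
  have hv0 : (0:ℝ) < v := by linarith
  have hu0 : (0:ℝ) < u := by linarith
  have hsu : (1:ℝ) ≤ Real.sqrt u := by
    rw [show (1:ℝ) = Real.sqrt 1 by simp]; exact Real.sqrt_le_sqrt hu
  have hsv : (1:ℝ) ≤ Real.sqrt v := by
    rw [show (1:ℝ) = Real.sqrt 1 by simp]; exact Real.sqrt_le_sqrt hv
  have hsuv : Real.sqrt v ≤ Real.sqrt u := Real.sqrt_le_sqrt hvu
  have hdiv : Real.log u - Real.log v = Real.log (u / v) :=
    (Real.log_div (ne_of_gt hu0) (ne_of_gt hv0)).symm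
  have h1 : (1:ℝ) ≤ u / v := (one_le_div hv0).2 hvu
  have h2 : Real.log (u / v) ≤ 2 * (Real.sqrt (u/v) - 1) := aux_log_le h1
  have h3 : Real.sqrt (u / v) = Real.sqrt u / Real.sqrt v :=
    Real.sqrt_div (le_of_lt hu0) v
  have hsv0 : (0:ℝ) < Real.sqrt v := by linarith
  have hsu0 : (0:ℝ) < Real.sqrt u := by linarith
  have habs1 : |Real.log u - Real.log v| = Real.log u - Real.log v :=
    abs_of_nonneg (by linarith [Real.log_le_log hv0 hvu])
  have habs2 : |u - v| = u - v := abs_of_nonneg (by linarith)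
  rw [habs1, habs2, le_div_iff₀ (by positivity)]
  have e : 2 * (Real.sqrt u / Real.sqrt v - 1) * (Real.sqrt u * Real.sqrt v) =
      2 * (Real.sqrt u * Real.sqrt u - Real.sqrt u * Real.sqrt v) := by
    field_simp
  have hu2 : Real.sqrt u * Real.sqrt u = u := Real.mul_self_sqrt (le_of_lt hu0)
  have hv2 : Real.sqrt v * Real.sqrt v = v := Real.mul_self_sqrt (le_of_lt hv0)
  have hlog : Real.log u - Real.log v ≤ 2 * (Real.sqrt u / Real.sqrt v - 1) := by
    rw [hdiv]; rw [h3] at h2; exact h2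
  have hmono : Real.sqrt v * Real.sqrt v ≤ Real.sqrt u * Real.sqrt v :=
    mul_le_mul_of_nonneg_right hsuv (le_of_lt hsv0)
  calc (Real.log u - Real.log v) * (Real.sqrt u * Real.sqrt v)
      ≤ 2 * (Real.sqrt u / Real.sqrt v - 1) * (Real.sqrt u * Real.sqrt v) := by
        apply mul_le_mul_of_nonneg_right hlog (by positivity)
    _ = 2 * (Real.sqrt u * Real.sqrt u - Real.sqrt u * Real.sqrt v) := e
    _ ≤ 2 * (u - v) := by nlinarith

lemma aux_tel (a b : ℕ) (hab : a ≤ b) :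
    ∑ n ∈ Finset.Ioc a b, (Real.sqrt n - Real.sqrt ((n - 1 : ℕ) : ℝ)) =
      Real.sqrt b - Real.sqrt a := by
  induction b, hab using Nat.le_induction with
  | base => simp
  | succ b hab ih =>
    rw [Finset.sum_Ioc_succ_top hab, ih]
    have : ((b + 1 - 1 : ℕ) : ℝ) = (b : ℝ) := by norm_num
    rw [this]
    push_cast
    ring

lemma aux_inv_sqrt (n : ℕ) (hn : 1 ≤ n) :
    (Real.sqrt n)⁻¹ ≤ 2 * (Real.sqrt n - Real.sqrt ((n - 1 : ℕ) : ℝ)) := by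
  have hcast : ((n - 1 : ℕ) : ℝ) = (n : ℝ) - 1 := by
    push_cast [Nat.cast_sub hn]; ring
  rw [hcast]
  set u := Real.sqrt ((n : ℝ)) with hu
  set v := Real.sqrt ((n : ℝ) - 1) with hv
  have hn1 : (1:ℝ) ≤ (n : ℝ) := by exact_mod_cast hn
  have hu2 : u ^ 2 = (n : ℝ) := Real.sq_sqrt (by linarith)
  have hv2 : v ^ 2 = (n : ℝ) - 1 := Real.sq_sqrt (by linarith)
  have hu1 : (1:ℝ) ≤ u := by
    rw [hu, show (1:ℝ) = Real.sqrt 1 by simp]; exact Real.sqrt_le_sqrt hn1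
  have hv0 : 0 ≤ v := Real.sqrt_nonneg _
  have hvu : v ≤ u := Real.sqrt_le_sqrt (by linarith)
  rw [inv_le_iff_one_le_mul₀ (by linarith)]
  nlinarith [sq_nonneg (u - v)]

lemma aux_sum_inv_sqrt (a b : ℕ) (hab : a ≤ b) :
    ∑ n ∈ Finset.Ioc a b, (Real.sqrt n)⁻¹ ≤ 2 * (Real.sqrt b - Real.sqrt a) := by
  calc ∑ n ∈ Finset.Ioc a b, (Real.sqrt n)⁻¹
      ≤ ∑ n ∈ Finset.Ioc a b, 2 * (Real.sqrt n - Real.sqrt ((n - 1 : ℕ) : ℝ)) := by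
        apply Finset.sum_le_sum
        intro n hn
        exact aux_inv_sqrt n (Nat.one_le_iff_ne_zero.2 (by
          have := (Finset.mem_Ioc.1 hn).1; omega))
    _ = 2 * (Real.sqrt b - Real.sqrt a) := by
        rw [← Finset.mul_sum, aux_tel a b hab]

lemma aux_pow_diff {a b R : ℝ} (ha : 0 ≤ a) (hb : 0 ≤ b) (haR : a ≤ R) (hbR : b ≤ R)
    (i : ℕ) : |a ^ i - b ^ i| ≤ (i : ℝ) * R ^ (i - 1) * |a - b| := by
  have hR0 : (0:ℝ) ≤ R := le_trans ha haR
  rw [← geom_sum₂_mul a b i, abs_mul]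
  have hsum : |∑ j ∈ Finset.range i, a ^ j * b ^ (i - 1 - j)| ≤ (i : ℝ) * R ^ (i - 1) := by
    calc |∑ j ∈ Finset.range i, a ^ j * b ^ (i - 1 - j)|
        ≤ ∑ j ∈ Finset.range i, |a ^ j * b ^ (i - 1 - j)| :=
          Finset.abs_sum_le_sum_abs _ _
      _ ≤ ∑ j ∈ Finset.range i, R ^ (i - 1) := by
          apply Finset.sum_le_sum
          intro j hj
          have hj' : j + (i - 1 - j) = i - 1 := by
            have := Finset.mem_range.1 hj; omega
          rw [abs_of_nonneg (by positivity)]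
          calc a ^ j * b ^ (i - 1 - j) ≤ R ^ j * R ^ (i - 1 - j) := by
                apply mul_le_mul (pow_le_pow_left₀ ha haR j)
                  (pow_le_pow_left₀ hb hbR _) (by positivity) (by positivity)
            _ = R ^ (i - 1) := by rw [← pow_add, hj']
      _ = (i : ℝ) * R ^ (i - 1) := by
          rw [Finset.sum_const, Finset.card_range, nsmul_eq_mul]
  exact mul_le_mul_of_nonneg_right hsum (abs_nonneg _)

lemma aux_poly (p : Polynomial ℝ) {a b R : ℝ} (ha : 0 ≤ a) (hb : 0 ≤ b)
    (haR : a ≤ R) (hbR : b ≤ R) (hR : 1 ≤ R) :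
    |p.eval a - p.eval b| ≤
      (∑ i ∈ Finset.range (p.natDegree + 1), (i : ℝ) * |p.coeff i|) *
        R ^ (p.natDegree - 1) * |a - b| := by
  have hR0 : (0:ℝ) ≤ R := le_trans ha haR
  rw [Polynomial.eval_eq_sum_range (R := ℝ) a, Polynomial.eval_eq_sum_range (R := ℝ) b,
    ← Finset.sum_sub_distrib]
  calc |∑ i ∈ Finset.range (p.natDegree + 1), (p.coeff i * a ^ i - p.coeff i * b ^ i)|
      ≤ ∑ i ∈ Finset.range (p.natDegree + 1), |p.coeff i * a ^ i - p.coeff i * b ^ i| :=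
        Finset.abs_sum_le_sum_abs _ _
    _ ≤ ∑ i ∈ Finset.range (p.natDegree + 1),
          (i : ℝ) * |p.coeff i| * R ^ (p.natDegree - 1) * |a - b| := by
        apply Finset.sum_le_sum
        intro i hi
        rw [← mul_sub, abs_mul]
        have h1 : |a ^ i - b ^ i| ≤ (i : ℝ) * R ^ (i - 1) * |a - b| :=
          aux_pow_diff ha hb haR hbR i
        have h2 : R ^ (i - 1) ≤ R ^ (p.natDegree - 1) := by
          apply pow_le_pow_right₀ hR
          have := Finset.mem_range.1 hi; omega
        calc |p.coeff i| * |a ^ i - b ^ i|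
            ≤ |p.coeff i| * ((i : ℝ) * R ^ (i - 1) * |a - b|) :=
              mul_le_mul_of_nonneg_left h1 (abs_nonneg _)
          _ ≤ |p.coeff i| * ((i : ℝ) * R ^ (p.natDegree - 1) * |a - b|) := by
              apply mul_le_mul_of_nonneg_left _ (abs_nonneg _)
              apply mul_le_mul_of_nonneg_right _ (abs_nonneg _)
              exact mul_le_mul_of_nonneg_left h2 (Nat.cast_nonneg i)
          _ = (i : ℝ) * |p.coeff i| * R ^ (p.natDegree - 1) * |a - b| := by ring
    _ = (∑ i ∈ Finset.range (p.natDegree + 1), (i : ℝ) * |p.coeff i|) *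
          R ^ (p.natDegree - 1) * |a - b| := by
        rw [Finset.sum_mul, Finset.sum_mul]

lemma aux_abs_log' {u v : ℝ} (hu : 1 ≤ u) (hv : 1 ≤ v) :
    |Real.log u - Real.log v| ≤ 2 * |u - v| / (Real.sqrt u * Real.sqrt v) := by
  rcases le_total v u with h | h
  · exact aux_abs_log hu hv h
  · rw [abs_sub_comm (Real.log u), abs_sub_comm u, mul_comm (Real.sqrt u)]
    exact aux_abs_log hv hu h

lemma aux_key (δ : ℝ) (N x : ℕ) (hδ1 : 1 ≤ δ) (hδN : δ ≤ (N : ℝ)) (hN : 0 < N)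
    (hx1 : N < x) (hx2 : x ≤ 2 * N) :
    ∑ n ∈ ((Finset.range (3 * N + 1)).filter
        (fun n => 0 < n ∧ |(n : ℝ) - (x : ℝ)| ≤ δ) : Finset ℕ),
      |Real.log n - Real.log x| ≤ 12 * δ ^ 2 / N := by
  set F := ((Finset.range (3 * N + 1)).filter
      (fun n => 0 < n ∧ |(n : ℝ) - (x : ℝ)| ≤ δ) : Finset ℕ) with hF
  set d := Nat.floor δ with hdd
  have hδ0 : (0:ℝ) ≤ δ := by linarith
  have hd1 : (d : ℝ) ≤ δ := Nat.floor_le hδ0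
  have hd2 : δ < (d : ℝ) + 1 := Nat.lt_floor_add_one δ
  have hdN : d ≤ N := by
    have : (d : ℝ) ≤ (N : ℝ) := le_trans hd1 hδN
    exact_mod_cast this
  have hdx : d + 1 ≤ x := by omega
  set a := x - (d + 1) with ha
  set b := x + d with hb
  have hcast_a : (a : ℝ) = (x : ℝ) - ((d : ℝ) + 1) := by
    rw [ha]; push_cast [Nat.cast_sub hdx]; ring
  have hsub : F ⊆ Finset.Ioc a b := by
    intro n hn
    rw [hF, Finset.mem_filter] at hn
    obtain ⟨_, hn0, hnd⟩ := hn
    obtain ⟨hl, hr⟩ := abs_le.1 hnd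
    have h1 : (x : ℝ) < (n : ℝ) + (d : ℝ) + 1 := by linarith
    have h2 : (n : ℝ) < (x : ℝ) + (d : ℝ) + 1 := by linarith
    have h1' : x < n + d + 1 := by exact_mod_cast h1
    have h2' : n < x + d + 1 := by exact_mod_cast h2
    rw [Finset.mem_Ioc]
    omega
  have hx0 : (0:ℝ) < (x : ℝ) := by
    have : 0 < x := by omega
    exact_mod_cast this
  have hsx : (0:ℝ) < Real.sqrt x := Real.sqrt_pos.2 hx0
  have hsum1 : ∑ n ∈ F, (Real.sqrt n)⁻¹ ≤ 6 * δ / Real.sqrt x := by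
    have hab : a ≤ b := by omega
    have step1 : ∑ n ∈ F, (Real.sqrt n)⁻¹ ≤ ∑ n ∈ Finset.Ioc a b, (Real.sqrt n)⁻¹ := by
      apply Finset.sum_le_sum_of_subset_of_nonneg hsub
      intro n _ _; positivity
    have step2 := aux_sum_inv_sqrt a b hab
    have hsb : Real.sqrt x ≤ Real.sqrt b := by
      apply Real.sqrt_le_sqrt
      have : x ≤ b := by omega
      exact_mod_cast this
    have hsa : (0:ℝ) ≤ Real.sqrt a := Real.sqrt_nonneg _
    have hb2 : (Real.sqrt b) ^ 2 = (b : ℝ) := Real.sq_sqrt (Nat.cast_nonneg b)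
    have ha2 : (Real.sqrt a) ^ 2 = (a : ℝ) := Real.sq_sqrt (Nat.cast_nonneg a)
    have hba : (b : ℝ) - (a : ℝ) = 2 * (d : ℝ) + 1 := by
      rw [hcast_a, hb]; push_cast; ring
    have hkey : 2 * (Real.sqrt b - Real.sqrt a) ≤ 6 * δ / Real.sqrt x := by
      rw [le_div_iff₀ hsx]
      nlinarith [sq_nonneg (Real.sqrt b - Real.sqrt a), sq_nonneg (Real.sqrt b + Real.sqrt a),
        mul_le_mul_of_nonneg_left hsb hsa]
    linarith
  have hterm : ∀ n ∈ F, |Real.log n - Real.log x| ≤ (2 * δ / Real.sqrt x) * (Real.sqrt n)⁻¹ := by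
    intro n hn
    rw [hF, Finset.mem_filter] at hn
    obtain ⟨_, hn0, hnd⟩ := hn
    have hn1 : (1:ℝ) ≤ (n : ℝ) := by exact_mod_cast hn0
    have hx1' : (1:ℝ) ≤ (x : ℝ) := by
      have : 1 ≤ x := by omega
      exact_mod_cast this
    have h := aux_abs_log' hn1 hx1'
    have hsn : (0:ℝ) < Real.sqrt n := Real.sqrt_pos.2 (by linarith)
    calc |Real.log n - Real.log x| ≤ 2 * |(n:ℝ) - (x:ℝ)| / (Real.sqrt n * Real.sqrt x) := h
      _ ≤ 2 * δ / (Real.sqrt n * Real.sqrt x) := by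
          apply div_le_div_of_nonneg_right _ (by positivity)
          linarith
      _ = (2 * δ / Real.sqrt x) * (Real.sqrt n)⁻¹ := by
          field_simp
  calc ∑ n ∈ F, |Real.log n - Real.log x|
      ≤ ∑ n ∈ F, (2 * δ / Real.sqrt x) * (Real.sqrt n)⁻¹ := Finset.sum_le_sum hterm
    _ = (2 * δ / Real.sqrt x) * ∑ n ∈ F, (Real.sqrt n)⁻¹ := (Finset.mul_sum _ _ _).symm
    _ ≤ (2 * δ / Real.sqrt x) * (6 * δ / Real.sqrt x) := by
        apply mul_le_mul_of_nonneg_left hsum1 (by positivity)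
    _ = 12 * δ ^ 2 / (x : ℝ) := by
        have hxx : Real.sqrt x * Real.sqrt x = (x:ℝ) := Real.mul_self_sqrt (le_of_lt hx0)
        rw [div_mul_div_comm, hxx]; ring
    _ ≤ 12 * δ ^ 2 / (N : ℝ) := by
        apply div_le_div_of_nonneg_left (by positivity) _ _
        · exact_mod_cast hN
        · exact_mod_cast le_of_lt hx1

theorem proposition_one (p : Polynomial ℝ) :
    ∃ K : ℝ, 0 < K ∧
      ∀ (M δ : ℝ) (N : ℕ) (w : ℝ → ℂ) (f : ℕ → ℂ) (A B : ℕ → ℂ),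
        0 ≤ M → (∀ x : ℝ, ‖w x‖ ≤ M) → (∀ x : ℝ, δ < |x| → w x = 0) →
        1 ≤ δ → δ ≤ (N : ℝ) → 0 < N →
        (∀ x : ℕ, A x =
          (∑ n ∈ ((Finset.range (3 * N + 1)).filter
              (fun n => 0 < n ∧ |(n : ℝ) - (x : ℝ)| ≤ δ) : Finset ℕ),
            w ((n : ℝ) - (x : ℝ)) * f n) -
          ((p.eval (Real.log x) : ℝ) : ℂ) *
            ∑ n ∈ ((Finset.range (3 * N + 1)).filter
                (fun n => 0 < n ∧ |(n : ℝ) - (x : ℝ)| ≤ δ) : Finset ℕ),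
              w ((n : ℝ) - (x : ℝ))) →
        (∀ x : ℕ, B x =
          ∑ n ∈ ((Finset.range (3 * N + 1)).filter
              (fun n => 0 < n ∧ |(n : ℝ) - (x : ℝ)| ≤ δ) : Finset ℕ),
            w ((n : ℝ) - (x : ℝ)) * (f n - ((p.eval (Real.log n) : ℝ) : ℂ))) →
        ∑ x ∈ Finset.Ioc N (2 * N), ‖A x‖ ^ 2 ≤
          K * (∑ x ∈ Finset.Ioc N (2 * N), ‖B x‖ ^ 2 +
            M ^ 2 * ((N : ℝ)⁻¹ * δ ^ 4) *
              Real.log (3 * N) ^ (2 * p.natDegree - 2)) := by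
  classical
  set c := p.natDegree with hc
  set Cp := ∑ i ∈ Finset.range (c + 1), (i : ℝ) * |p.coeff i| with hCp
  have hCp0 : 0 ≤ Cp := by
    apply Finset.sum_nonneg
    intro i _
    positivity
  refine ⟨2 + 288 * Cp ^ 2, by positivity, ?_⟩
  intro M δ N w f A B hM hw hwsupp hδ1 hδN hN hA hB
  set R := Real.log (3 * (N : ℝ)) with hR
  have hN1 : (1:ℝ) ≤ (N : ℝ) := by exact_mod_cast hN
  have hR1 : (1:ℝ) ≤ R := by
    rw [hR, Real.le_log_iff_exp_le (by linarith)]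
    have h1 : Real.exp 1 < 2.7182818286 := Real.exp_one_lt_d9
    linarith
  have hR0 : (0:ℝ) ≤ R := by linarith
  set E := M * (Cp * R ^ (c - 1) * (12 * δ ^ 2 / N)) with hE
  have hE0 : 0 ≤ E := by
    apply mul_nonneg hM
    apply mul_nonneg (mul_nonneg hCp0 (by positivity))
    positivity
  -- pointwise bound
  have hAB : ∀ x ∈ Finset.Ioc N (2 * N), ‖A x‖ ≤ ‖B x‖ + E := by
    intro x hx
    rw [Finset.mem_Ioc] at hx
    obtain ⟨hx1, hx2⟩ := hx
    set F := ((Finset.range (3 * N + 1)).filter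
        (fun n => 0 < n ∧ |(n : ℝ) - (x : ℝ)| ≤ δ) : Finset ℕ) with hF
    set S := ∑ n ∈ F, w ((n : ℝ) - (x : ℝ)) *
        (((p.eval (Real.log n) - p.eval (Real.log x) : ℝ)) : ℂ) with hS
    have hAx : A x = B x + S := by
      rw [hA x, hB x, hS, ← Finset.sum_add_distrib, Finset.mul_sum,
        ← Finset.sum_sub_distrib]
      apply Finset.sum_congr rfl
      intro n _
      push_cast
      ring
    have hx0' : (0:ℝ) < (x : ℝ) := by
      have : 0 < x := by omega
      exact_mod_cast this
    have hx3N : (x : ℝ) ≤ 3 * (N : ℝ) := by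
      have h' : x ≤ 3 * N := by omega
      have := (Nat.cast_le (α := ℝ)).2 h'
      push_cast at this
      linarith
    have hxR : Real.log x ≤ R ∧ 0 ≤ Real.log x := by
      constructor
      · rw [hR]
        exact Real.log_le_log hx0' hx3N
      · apply Real.log_nonneg
        have : 1 ≤ x := by omega
        exact_mod_cast this
    have hSE : ‖S‖ ≤ E := by
      calc ‖S‖ ≤ ∑ n ∈ F, ‖w ((n : ℝ) - (x : ℝ)) *
            (((p.eval (Real.log n) - p.eval (Real.log x) : ℝ)) : ℂ)‖ :=
            norm_sum_le _ _
        _ ≤ ∑ n ∈ F, M * (Cp * R ^ (c - 1) * |Real.log n - Real.log x|) := by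
            apply Finset.sum_le_sum
            intro n hn
            rw [hF, Finset.mem_filter, Finset.mem_range] at hn
            obtain ⟨hn3, hn0, _⟩ := hn
            rw [norm_mul, Complex.norm_real, Real.norm_eq_abs]
            apply mul_le_mul (hw _) _ (abs_nonneg _) hM
            have hlogn0 : 0 ≤ Real.log n := by
              apply Real.log_nonneg
              exact_mod_cast hn0
            have hlognR : Real.log n ≤ R := by
              have h' : n ≤ 3 * N := by omega
              have h'' := (Nat.cast_le (α := ℝ)).2 h'
              push_cast at h''
              rw [hR]
              exact Real.log_le_log (by exact_mod_cast hn0) h''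
            have := aux_poly p hlogn0 hxR.2 hlognR hxR.1 hR1
            calc |p.eval (Real.log n) - p.eval (Real.log x)|
                ≤ Cp * R ^ (c - 1) * |Real.log n - Real.log x| := this
              _ = Cp * R ^ (c - 1) * |Real.log n - Real.log x| := rfl
        _ = M * (Cp * R ^ (c - 1)) * ∑ n ∈ F, |Real.log n - Real.log x| := by
            rw [Finset.mul_sum]
            apply Finset.sum_congr rfl
            intro n _; ring
        _ ≤ M * (Cp * R ^ (c - 1)) * (12 * δ ^ 2 / N) := by
            apply mul_le_mul_of_nonneg_left _ (by positivity)
            exact aux_key δ N x hδ1 hδN hN hx1 hx2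
        _ = E := by rw [hE]; ring
    calc ‖A x‖ = ‖B x + S‖ := by rw [hAx]
      _ ≤ ‖B x‖ + ‖S‖ := norm_add_le _ _
      _ ≤ ‖B x‖ + E := by linarith
  -- sum the squares
  have hsq : ∀ x ∈ Finset.Ioc N (2 * N),
      ‖A x‖ ^ 2 ≤ 2 * ‖B x‖ ^ 2 + 2 * E ^ 2 := by
    intro x hx
    have h1 : ‖A x‖ ^ 2 ≤ (‖B x‖ + E) ^ 2 :=
      pow_le_pow_left₀ (norm_nonneg _) (hAB x hx) 2
    nlinarith [sq_nonneg (‖B x‖ - E)]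
  have hNR : (N : ℝ) ≠ 0 := by positivity
  calc ∑ x ∈ Finset.Ioc N (2 * N), ‖A x‖ ^ 2
      ≤ ∑ x ∈ Finset.Ioc N (2 * N), (2 * ‖B x‖ ^ 2 + 2 * E ^ 2) :=
        Finset.sum_le_sum hsq
    _ = 2 * (∑ x ∈ Finset.Ioc N (2 * N), ‖B x‖ ^ 2) + (N : ℝ) * (2 * E ^ 2) := by
        rw [Finset.sum_add_distrib, Finset.sum_const, ← Finset.mul_sum, Nat.card_Ioc]
        have : (2 * N - N) = N := by omega
        rw [this, nsmul_eq_mul]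
    _ = 2 * (∑ x ∈ Finset.Ioc N (2 * N), ‖B x‖ ^ 2) +
        288 * Cp ^ 2 * (M ^ 2 * ((N : ℝ)⁻¹ * δ ^ 4) * R ^ (2 * c - 2)) := by
        congr 1
        rw [hE]
        have hpow : R ^ (c - 1) * R ^ (c - 1) = R ^ (2 * c - 2) := by
          rw [← pow_add]
          congr 1
          omega
        rw [← hpow]
        field_simp
        ring
    _ ≤ (2 + 288 * Cp ^ 2) * (∑ x ∈ Finset.Ioc N (2 * N), ‖B x‖ ^ 2 +
          M ^ 2 * ((N : ℝ)⁻¹ * δ ^ 4) * R ^ (2 * c - 2)) := by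
        have hS0 : 0 ≤ ∑ x ∈ Finset.Ioc N (2 * N), ‖B x‖ ^ 2 :=
          Finset.sum_nonneg fun x _ => by positivity
        have hT0 : 0 ≤ M ^ 2 * ((N : ℝ)⁻¹ * δ ^ 4) * R ^ (2 * c - 2) := by positivity
        nlinarith [mul_nonneg (mul_nonneg (by norm_num : (0:ℝ) ≤ 288) (sq_nonneg Cp)) hS0]
end
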